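/- Let Q be a Markov kernel on X, C a measurable set, lambda a measure on X, and eps_minus, eps_plus positive constants with eps_minus * lambda(A ∩ C) <= Q(x, A ∩ C) <= eps_plus * lambda(A ∩ C) for all x in C, A measurable. Define the kernel R(x, A) = Q(x,A) - eps_minus * 1_C(x) * lambda(A ∩ C). Then R is a nonnegative kernel, and for every x in C and every nonnegative measurable f supported in C, R(x, f) <= rho * Q(x, f) where rho = 1 - eps_minus/eps_plus. -/

import Mathlib

open MeasureTheory ProbabilityTheory
open scoped ENNReal NNReal

/-- Contraction decomposition underlying Proposition 2: if `C` is a local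
Doeblin set for `Q` with constants `0 < ε₋ ≤ ε₊` and measure `λ`, then the
residual kernel `R(x, A) = Q(x, A) - ε₋ 1_C(x) λ(A ∩ C)` is nonnegative
(expressed as `ε₋ λ(A ∩ C) ≤ Q(x, A)` for `x ∈ C`), and for every `x ∈ C` and
every nonnegative measurable `f` supported in `C`,
`R(x, f) ≤ ρ Q(x, f)` with `ρ = 1 - ε₋/ε₊`, i.e.
`Q(x, f) ≤ ρ Q(x, f) + ε₋ λ(f)`. -/
theorem stmt3 {X : Type*} [MeasurableSpace X]
    (Q : Kernel X X) [IsMarkovKernel Q]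
    (C : Set X) (hC : MeasurableSet C)
    (lam : Measure X)
    (em ep : ℝ≥0) (hem : 0 < em) (hle : em ≤ ep)
    (hLD : ∀ x ∈ C, ∀ A : Set X, MeasurableSet A →
      (em : ℝ≥0∞) * lam (A ∩ C) ≤ Q x (A ∩ C) ∧
        Q x (A ∩ C) ≤ (ep : ℝ≥0∞) * lam (A ∩ C)) :
    (∀ x ∈ C, ∀ A : Set X, MeasurableSet A → (em : ℝ≥0∞) * lam (A ∩ C) ≤ Q x A) ∧
    (∀ x ∈ C, ∀ f : X → ℝ≥0∞, Measurable f → (∀ x' ∉ C, f x' = 0) →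
      ∫⁻ x', f x' ∂(Q x) ≤
        ((1 - em / ep : ℝ≥0) : ℝ≥0∞) * ∫⁻ x', f x' ∂(Q x) +
          (em : ℝ≥0∞) * ∫⁻ x', f x' ∂lam) := by
  have hep : (0 : ℝ≥0) < ep := lt_of_lt_of_le hem hle
  constructor
  · intro x hx A hA
    exact le_trans ((hLD x hx A hA).1)
      (measure_mono (Set.inter_subset_left))
  · intro x hx f hf hsupp
    -- f equals its indicator on C
    have hind : f = C.indicator f := by
      funext y
      by_cases hy : y ∈ C
      · simp [Set.indicator_of_mem hy]
      · simp [Set.indicator_of_notMem hy, hsupp y hy]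
    have hQrestr : ∫⁻ x', f x' ∂(Q x) = ∫⁻ x' in C, f x' ∂(Q x) := by
      conv_lhs => rw [hind]
      exact lintegral_indicator hC f
    have hlrestr : ∫⁻ x' in C, f x' ∂lam ≤ ∫⁻ x', f x' ∂lam :=
      lintegral_mono' Measure.restrict_le_self le_rfl
    -- key: (Q x).restrict C ≤ ep • lam.restrict C
    have hmle : (Q x).restrict C ≤ (ep : ℝ≥0∞) • lam.restrict C := by
      refine Measure.le_intro fun A hA _ => ?_
      rw [Measure.restrict_apply hA, Measure.smul_apply, Measure.restrict_apply hA]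
      simpa using (hLD x hx A hA).2
    have hkey : ∫⁻ x', f x' ∂(Q x) ≤ (ep : ℝ≥0∞) * ∫⁻ x', f x' ∂lam := by
      rw [hQrestr]
      calc ∫⁻ x' in C, f x' ∂(Q x)
          ≤ ∫⁻ x', f x' ∂((ep : ℝ≥0∞) • lam.restrict C) := lintegral_mono' hmle le_rfl
        _ = (ep : ℝ≥0∞) * ∫⁻ x' in C, f x' ∂lam := by rw [lintegral_smul_measure, smul_eq_mul]
        _ ≤ (ep : ℝ≥0∞) * ∫⁻ x', f x' ∂lam := by
            exact mul_le_mul_right hlrestr _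
    -- arithmetic
    have h1 : ((em / ep : ℝ≥0) : ℝ≥0∞) * ∫⁻ x', f x' ∂(Q x) ≤
        (em : ℝ≥0∞) * ∫⁻ x', f x' ∂lam := by
      calc ((em / ep : ℝ≥0) : ℝ≥0∞) * ∫⁻ x', f x' ∂(Q x)
          ≤ ((em / ep : ℝ≥0) : ℝ≥0∞) * ((ep : ℝ≥0∞) * ∫⁻ x', f x' ∂lam) :=
            by gcongr
        _ = (em : ℝ≥0∞) * ∫⁻ x', f x' ∂lam := by
            rw [← mul_assoc, ← ENNReal.coe_mul, div_mul_cancel₀ _ hep.ne']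
    calc ∫⁻ x', f x' ∂(Q x)
        = (((1 - em / ep : ℝ≥0) : ℝ≥0∞) + ((em / ep : ℝ≥0) : ℝ≥0∞)) *
            ∫⁻ x', f x' ∂(Q x) := by
          rw [← ENNReal.coe_add, tsub_add_cancel_of_le
            (div_le_one_of_le₀ hle hep.le), ENNReal.coe_one, one_mul]
      _ = ((1 - em / ep : ℝ≥0) : ℝ≥0∞) * ∫⁻ x', f x' ∂(Q x) +
            ((em / ep : ℝ≥0) : ℝ≥0∞) * ∫⁻ x', f x' ∂(Q x) := by rw [add_mul]
      _ ≤ _ := by gcongr
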